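/- Let W be an N×N real matrix with nonnegative entries that is weight-balanced, with Laplacian L = D − W, and assume d_i > 0 for all i. Let x̂, e ∈ ℝᴺ with x = x̂ − e, and let σ_1,…,σ_N ∈ (0,1). If the Algorithm-1 triggering condition e_i² ≤ (σ_i/(4 d_i)) Σ_{j=1}^N w_{ij}(x̂_i − x̂_j)² holds for every i, then −xᵀL x̂ ≤ −(1/4) Σ_{i=1}^N (1 − σ_i) Σ_{j=1}^N w_{ij}(x̂_i − x̂_j)² ≤ 0; i.e. the Lyapunov function V₁(x) = (1/2)(x − x̄)ᵀ(x − x̄) is nonincreasing along the dynamics ẋ = −L x̂. -/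
import Mathlib


open Matrix Finset

/-- The out-degree of node `i`: the `i`-th row sum of the weight matrix. -/
def outDeg {N : ℕ} (W : Matrix (Fin N) (Fin N) ℝ) (i : Fin N) : ℝ := ∑ j, W i j

/-- `W` is weight-balanced if every row sum equals the corresponding column sum. -/
def IsWeightBalanced {N : ℕ} (W : Matrix (Fin N) (Fin N) ℝ) : Prop :=
  ∀ i, (∑ j, W i j) = ∑ j, W j i

/-- The Laplacian `L = D − W`. -/
noncomputable def lap {N : ℕ} (W : Matrix (Fin N) (Fin N) ℝ) : Matrix (Fin N) (Fin N) ℝ :=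
  Matrix.diagonal (outDeg W) - W
/-- under the Algorithm-1 trigger `eᵢ² ≤ (σᵢ/(4dᵢ)) ∑ⱼ wᵢⱼ(x̂ᵢ − x̂ⱼ)²`,
`−xᵀLx̂ ≤ −(1/4) ∑ᵢ (1 − σᵢ) ∑ⱼ wᵢⱼ(x̂ᵢ − x̂ⱼ)² ≤ 0` (so `V₁` is nonincreasing). -/
theorem stmt4 {N : ℕ} (W : Matrix (Fin N) (Fin N) ℝ) (hW : ∀ i j, 0 ≤ W i j)
    (hWB : IsWeightBalanced W) (hd : ∀ i, 0 < outDeg W i)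
    (xh e : Fin N → ℝ) (σ : Fin N → ℝ) (hσ : ∀ i, σ i ∈ Set.Ioo (0 : ℝ) 1)
    (htrig : ∀ i, e i^2 ≤ (σ i / (4 * outDeg W i)) * ∑ j, W i j * (xh i - xh j)^2) :
    -((xh - e) ⬝ᵥ (lap W *ᵥ xh)) ≤
        -(1/4) * ∑ i, (1 - σ i) * ∑ j, W i j * (xh i - xh j)^2 ∧
      -(1/4) * ∑ i, (1 - σ i) * ∑ j, W i j * (xh i - xh j)^2 ≤ 0 := by
  set S : Fin N → ℝ := fun i => ∑ j, W i j * (xh i - xh j)^2 with hS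
  have hSnn : ∀ i, 0 ≤ S i := fun i =>
    Finset.sum_nonneg fun j _ => mul_nonneg (hW i j) (sq_nonneg _)
  have hLmul : ∀ i, (lap W *ᵥ xh) i = ∑ j, W i j * (xh i - xh j) := by
    intro i
    have h1 : (lap W *ᵥ xh) i = outDeg W i * xh i - ∑ j, W i j * xh j := by
      simp [lap, mulVec, dotProduct, Matrix.sub_apply, Matrix.diagonal_apply, ite_mul,
        Finset.sum_sub_distrib, sub_mul]
    rw [h1, outDeg, Finset.sum_mul, ← Finset.sum_sub_distrib]
    exact Finset.sum_congr rfl fun j _ => by ring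
  -- balance identity
  have hbal : (∑ i, ∑ j, W i j * xh j ^ 2) = ∑ i, ∑ j, W i j * xh i ^ 2 := by
    rw [Finset.sum_comm]
    refine Finset.sum_congr rfl fun i _ => ?_
    rw [← Finset.sum_mul, ← Finset.sum_mul, ← hWB i]
  -- quadratic form identity
  have hx : xh ⬝ᵥ (lap W *ᵥ xh) = (1/2) * ∑ i, S i := by
    have h1 : xh ⬝ᵥ (lap W *ᵥ xh)
        = (∑ i, ∑ j, W i j * xh i ^ 2) - ∑ i, ∑ j, W i j * (xh i * xh j) := by
      rw [← Finset.sum_sub_distrib]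
      refine Finset.sum_congr rfl fun i _ => ?_
      rw [hLmul i, Finset.mul_sum, ← Finset.sum_sub_distrib]
      exact Finset.sum_congr rfl fun j _ => by ring
    have h2 : ∑ i, S i
        = (∑ i, ∑ j, W i j * xh i ^ 2) - 2 * (∑ i, ∑ j, W i j * (xh i * xh j))
          + ∑ i, ∑ j, W i j * xh j ^ 2 := by
      simp only [hS, Finset.mul_sum, ← Finset.sum_add_distrib, ← Finset.sum_sub_distrib]
      refine Finset.sum_congr rfl fun i _ => Finset.sum_congr rfl fun j _ => by ring
    rw [h1]
    rw [h2, hbal]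
    ring
  -- error term bound
  have he : e ⬝ᵥ (lap W *ᵥ xh) ≤ ∑ i, ((σ i + 1)/4) * S i := by
    simp only [dotProduct]
    apply Finset.sum_le_sum
    intro i _
    rw [hLmul i]
    have h1 : e i * ∑ j, W i j * (xh i - xh j) ≤ outDeg W i * e i ^ 2 + (1/4) * S i := by
      rw [Finset.mul_sum, outDeg, Finset.sum_mul, hS]
      simp only [Finset.mul_sum, ← Finset.sum_add_distrib]
      apply Finset.sum_le_sum
      intro j _
      nlinarith [mul_nonneg (hW i j) (sq_nonneg (e i - (xh i - xh j)/2))]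
    have h2 : outDeg W i * e i ^ 2 ≤ (σ i / 4) * S i := by
      have h3 := mul_le_mul_of_nonneg_left (htrig i) (hd i).le
      have hne : outDeg W i ≠ 0 := (hd i).ne'
      have h4 : outDeg W i * ((σ i / (4 * outDeg W i)) * S i) = (σ i / 4) * S i := by
        calc outDeg W i * ((σ i / (4 * outDeg W i)) * S i)
            = (outDeg W i / outDeg W i) * ((σ i / 4) * S i) := by ring
          _ = (σ i / 4) * S i := by rw [div_self hne, one_mul]
      rw [h4] at h3
      exact h3
    linarith
  have hdot : (xh - e) ⬝ᵥ (lap W *ᵥ xh) = xh ⬝ᵥ (lap W *ᵥ xh) - e ⬝ᵥ (lap W *ᵥ xh) := by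
    simp [dotProduct, Pi.sub_apply, sub_mul, Finset.sum_sub_distrib]
  have hre : -(1/4) * ∑ i, (1 - σ i) * S i
      = (∑ i, ((σ i + 1)/4) * S i) - (1/2) * ∑ i, S i := by
    simp only [Finset.mul_sum, ← Finset.sum_sub_distrib, neg_mul, ← Finset.sum_neg_distrib]
    refine Finset.sum_congr rfl fun i _ => by ring
  have hz : 0 ≤ ∑ i, (1 - σ i) * S i :=
    Finset.sum_nonneg fun i _ => mul_nonneg (by linarith [(hσ i).2]) (hSnn i)
  constructor
  · rw [hdot, hre]
    linarith
  · linarith
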